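/- For any real numbers t_0 ≥ t_1 > 0 with t_0 > t_1 (so the maximum exponent is attained exactly once among two), there exist constants c_1, c_2 > 0 such that for all real g ≥ 2, the sum over pairs (a_1, a_2) of positive integers with a_1^{t_0} · a_2^{t_1} ≥ g of the product 1/(a_1(a_1+1)) · 1/(a_2(a_2+1)) lies between c_1 · g^{-1/t_0} and c_2 · g^{-1/t_0}. -/

import Mathlib

open scoped BigOperators

lemma aux (u : ℝ) (hu : 0 < u) : 1 / (u * (u + 1)) = 1 / u - 1 / (u + 1) := by
  have h1 : u ≠ 0 := hu.ne'
  have h2 : u + 1 ≠ 0 := by linarith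
  field_simp
  ring

noncomputable def pfn (a : ℕ+) : ℝ := 1 / ((a : ℝ) * ((a : ℝ) + 1))

lemma pfn_pos (a : ℕ+) : 0 < pfn a := by
  have h : (0:ℝ) < (a:ℝ) := by exact_mod_cast a.pos
  unfold pfn; positivity

lemma pfn_nonneg (a : ℕ+) : 0 ≤ pfn a := (pfn_pos a).le

lemma hasSum_shift (x : ℝ) (hx : 0 < x) :
    HasSum (fun n : ℕ => 1 / ((x + n) * (x + n + 1))) (1 / x) := by
  have hnn : ∀ n : ℕ, 0 ≤ 1 / ((x + n) * (x + n + 1)) := by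
    intro n; have : (0:ℝ) ≤ n := Nat.cast_nonneg n; positivity
  rw [hasSum_iff_tendsto_nat_of_nonneg hnn]
  have key : ∀ N : ℕ, ∑ i ∈ Finset.range N, 1 / ((x + i) * (x + i + 1))
      = 1 / x - 1 / (x + N) := by
    intro N
    have h := Finset.sum_range_sub' (f := fun i : ℕ => 1 / (x + i)) N
    simp only [Nat.cast_zero, add_zero] at h
    rw [← h]
    apply Finset.sum_congr rfl
    intro i _
    have h1 : (0:ℝ) < x + i := by have : (0:ℝ) ≤ i := Nat.cast_nonneg i; positivity
    have h2 : (0:ℝ) < x + i + 1 := by linarith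
    push_cast
    rw [← add_assoc]
    exact aux (x + i) h1
  simp only [key]
  have h0 : Filter.Tendsto (fun N : ℕ => 1 / (x + N)) Filter.atTop (nhds 0) := by
    have : Filter.Tendsto (fun N : ℕ => x + (N:ℝ)) Filter.atTop Filter.atTop :=
      Filter.tendsto_atTop_add_const_left _ x tendsto_natCast_atTop_atTop
    rw [show (fun N : ℕ => 1 / (x + (N:ℝ))) = (fun N : ℕ => x + (N:ℝ))⁻¹ from funext fun N => one_div _]
    exact this.inv_tendsto_atTop
  simpa using tendsto_const_nhds.sub h0

lemma hasSum_tail (A : ℕ+) :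
    HasSum (fun a : ℕ+ => if A ≤ a then pfn a else 0) (1 / (A : ℝ)) := by
  set f : ℕ+ → ℝ := fun a => if A ≤ a then pfn a else 0 with hf
  set ι : ℕ → ℕ+ := fun n => ⟨(A : ℕ) + n, by positivity⟩ with hι
  have hinj : Function.Injective ι := by
    intro m n h
    have := congrArg (fun x : ℕ+ => (x : ℕ)) h
    simpa [hι] using this
  have hrange : ∀ x ∉ Set.range ι, f x = 0 := by
    intro x hx
    have hlt : ¬ (A ≤ x) := by
      intro hle
      have hle' : (A : ℕ) ≤ (x : ℕ) := (PNat.coe_le_coe A x).mpr hle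
      exact hx ⟨(x : ℕ) - (A : ℕ), by
        apply PNat.coe_injective
        show (A : ℕ) + ((x : ℕ) - (A : ℕ)) = (x : ℕ)
        omega⟩
    simp [hf, hlt]
  rw [← hinj.hasSum_iff hrange]
  have hval : (f ∘ ι) = fun n : ℕ =>
      1 / (((A:ℝ) + n) * ((A:ℝ) + n + 1)) := by
    funext n
    have hle : A ≤ ι n := by
      rw [← PNat.coe_le_coe]; simp [hι]
    simp only [Function.comp, hf, if_pos hle, pfn]
    have hcast : ((ι n : ℕ+) : ℝ) = (A:ℝ) + n := by
      show (((A : ℕ) + n : ℕ) : ℝ) = (A:ℝ) + n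
      push_cast; ring
    rw [hcast]
  rw [hval]
  exact hasSum_shift _ (by exact_mod_cast A.pos)

lemma hasSum_pfn : HasSum pfn 1 := by
  have h := hasSum_tail 1
  have heq : (fun a : ℕ+ => if 1 ≤ a then pfn a else 0) = pfn :=
    funext fun a => if_pos a.one_le
  rw [heq] at h
  simpa using h

lemma summable_pfn : Summable pfn := hasSum_pfn.summable

lemma tail_rpow_le (t : ℝ) (ht : 0 < t) (x : ℝ) (hx : 0 < x) :
    ∑' a : ℕ+, (if x ≤ (a : ℝ) ^ t then pfn a else 0) ≤ x ^ (-(1/t)) := by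
  set y : ℝ := x ^ (1/t) with hy
  have hy0 : 0 < y := Real.rpow_pos_of_pos hx _
  set A : ℕ+ := ⟨⌈y⌉₊, Nat.ceil_pos.mpr hy0⟩ with hA
  have hcond : ∀ a : ℕ+, (x ≤ (a:ℝ) ^ t ↔ A ≤ a) := by
    intro a
    have ha0 : (0:ℝ) ≤ (a:ℝ) := by positivity
    have hpow : ((a:ℝ) ^ t) ^ (1/t) = (a:ℝ) := by
      rw [← Real.rpow_mul ha0, mul_one_div, div_self ht.ne', Real.rpow_one]
    have h1 : x ≤ (a:ℝ) ^ t ↔ y ≤ (a:ℝ) := by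
      constructor
      · intro h
        have h2 := Real.rpow_le_rpow hx.le h (le_of_lt (one_div_pos.mpr ht))
        rwa [hpow] at h2
      · intro h
        have h2 := Real.rpow_le_rpow hy0.le h ht.le
        have hyx : y ^ t = x := by
          rw [hy, ← Real.rpow_mul hx.le, one_div, inv_mul_cancel₀ ht.ne', Real.rpow_one]
        rwa [hyx] at h2
    rw [h1]
    have h2 : y ≤ (a:ℝ) ↔ (⌈y⌉₊ : ℕ) ≤ (a : ℕ) := Nat.ceil_le.symm
    rw [h2]
    exact PNat.coe_le_coe A a
  have heq : ∑' a : ℕ+, (if x ≤ (a:ℝ) ^ t then pfn a else 0)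
      = ∑' a : ℕ+, (if A ≤ a then pfn a else 0) :=
    tsum_congr fun a => if_congr (hcond a) rfl rfl
  rw [heq, (hasSum_tail A).tsum_eq]
  have hAy : y ≤ (A : ℝ) := by exact_mod_cast Nat.le_ceil y
  have hxy : x ^ (-(1/t)) = 1 / y := by
    rw [Real.rpow_neg hx.le, hy]
    exact (one_div _).symm
  rw [hxy]
  exact one_div_le_one_div_of_le hy0 hAy

set_option maxHeartbeats 1000000 in
theorem stmt_0 (t0 t1 : ℝ) (ht1 : 0 < t1) (ht : t1 < t0) :
    ∃ c1 c2 : ℝ, 0 < c1 ∧ 0 < c2 ∧ ∀ g : ℝ, 2 ≤ g →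
      c1 * g ^ (-(1 / t0)) ≤
        (∑' p : ℕ+ × ℕ+, if g ≤ ((p.1 : ℝ)) ^ t0 * ((p.2 : ℝ)) ^ t1 then
            1 / ((p.1 : ℝ) * ((p.1 : ℝ) + 1)) * (1 / ((p.2 : ℝ) * ((p.2 : ℝ) + 1))) else 0) ∧
      (∑' p : ℕ+ × ℕ+, if g ≤ ((p.1 : ℝ)) ^ t0 * ((p.2 : ℝ)) ^ t1 then
            1 / ((p.1 : ℝ) * ((p.1 : ℝ) + 1)) * (1 / ((p.2 : ℝ) * ((p.2 : ℝ) + 1))) else 0)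
          ≤ c2 * g ^ (-(1 / t0)) := by
  have ht0 : 0 < t0 := ht1.trans ht
  set s : ℝ := t1 / t0 with hs
  have hs1 : s < 1 := (div_lt_one ht0).mpr ht
  have hsum2 : Summable (fun b : ℕ+ => (b:ℝ) ^ (s - 2)) := by
    have h : Summable (fun n : ℕ => (n:ℝ) ^ (s - 2)) :=
      Real.summable_nat_rpow.mpr (by linarith)
    exact h.comp_injective PNat.coe_injective
  set c2 : ℝ := ∑' b : ℕ+, (b:ℝ) ^ (s - 2) with hc2
  have hc2pos : 0 < c2 := by
    refine Summable.tsum_pos hsum2 (fun b => by positivity) 1 ?_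
    norm_num
  refine ⟨1/2, c2, by norm_num, hc2pos, ?_⟩
  intro g hg
  have hg0 : (0:ℝ) < g := by linarith
  set F : ℕ+ × ℕ+ → ℝ := fun p =>
    if g ≤ ((p.1 : ℝ)) ^ t0 * ((p.2 : ℝ)) ^ t1 then pfn p.1 * pfn p.2 else 0 with hF
  have hFeq : (fun p : ℕ+ × ℕ+ =>
      if g ≤ ((p.1 : ℝ)) ^ t0 * ((p.2 : ℝ)) ^ t1 then
        1 / ((p.1 : ℝ) * ((p.1 : ℝ) + 1)) * (1 / ((p.2 : ℝ) * ((p.2 : ℝ) + 1))) else 0) = F := rfl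
  have hFnn : ∀ p, 0 ≤ F p := by
    intro p; rw [hF]; dsimp only
    split
    · exact mul_nonneg (pfn_nonneg _) (pfn_nonneg _)
    · exact le_refl 0
  have hFle : ∀ p, F p ≤ pfn p.1 * pfn p.2 := by
    intro p; rw [hF]; dsimp only
    split
    · exact le_refl _
    · exact mul_nonneg (pfn_nonneg _) (pfn_nonneg _)
  have hP : Summable (fun p : ℕ+ × ℕ+ => pfn p.1 * pfn p.2) :=
    summable_pfn.mul_of_nonneg summable_pfn pfn_nonneg pfn_nonneg
  have hFsum : Summable F := Summable.of_nonneg_of_le hFnn hFle hP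
  rw [hFeq]
  set y : ℝ := g ^ (1/t0) with hy
  have hy0 : 0 < y := Real.rpow_pos_of_pos hg0 _
  have hy1 : (1:ℝ) ≤ y := Real.one_le_rpow (by linarith) (by positivity)
  have hyt : y ^ t0 = g := by
    rw [hy, ← Real.rpow_mul hg0.le, one_div, inv_mul_cancel₀ ht0.ne', Real.rpow_one]
  have hgy : g ^ (-(1/t0)) = 1/y := by
    rw [Real.rpow_neg hg0.le, hy]
    exact (one_div _).symm
  constructor
  · -- lower bound
    set A : ℕ+ := ⟨⌈y⌉₊, Nat.ceil_pos.mpr hy0⟩ with hA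
    set G : ℕ+ × ℕ+ → ℝ := fun p => (if A ≤ p.1 then pfn p.1 else 0) * pfn p.2 with hG
    have hGF : ∀ p, G p ≤ F p := by
      intro p
      rw [hG, hF]; dsimp only
      by_cases h : A ≤ p.1
      · have hyp1 : y ≤ (p.1:ℝ) := by
          have h1 : (⌈y⌉₊:ℕ) ≤ (p.1:ℕ) := (PNat.coe_le_coe A p.1).mpr h
          calc y ≤ (⌈y⌉₊:ℝ) := Nat.le_ceil y
            _ ≤ (p.1:ℝ) := by exact_mod_cast h1
        have h2 : g ≤ (p.1:ℝ) ^ t0 := by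
          have h3 := Real.rpow_le_rpow hy0.le hyp1 ht0.le
          rwa [hyt] at h3
        have h4 : (1:ℝ) ≤ (p.2:ℝ) ^ t1 := by
          have : (1:ℝ) ≤ (p.2:ℝ) := by exact_mod_cast p.2.one_le
          exact Real.one_le_rpow this ht1.le
        have hcond : g ≤ (p.1:ℝ)^t0 * (p.2:ℝ)^t1 := by
          calc g = g * 1 := (mul_one g).symm
            _ ≤ (p.1:ℝ)^t0 * (p.2:ℝ)^t1 :=
              mul_le_mul h2 h4 (by norm_num) (by positivity)
        simp only [h, hcond, if_true]
        exact le_refl _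
      · simp only [h, if_false, zero_mul]
        exact hFnn p
    have hGmulsum : Summable (fun p : ℕ+ × ℕ+ =>
        (if A ≤ p.1 then pfn p.1 else 0) * pfn p.2) :=
      Summable.mul_of_nonneg (hasSum_tail A).summable summable_pfn
        (fun a => by dsimp only; split; exacts [pfn_nonneg _, le_refl 0]) pfn_nonneg
    have hGhs : HasSum G ((1/(A:ℝ)) * 1) := (hasSum_tail A).mul hasSum_pfn hGmulsum
    have hle := Summable.tsum_le_tsum hGF hGhs.summable hFsum
    rw [hGhs.tsum_eq] at hle
    have h2y : (A:ℝ) ≤ 2*y := by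
      have hc : ((⌈y⌉₊:ℕ):ℝ) < y + 1 := Nat.ceil_lt_add_one hy0.le
      have hc2 : (A:ℝ) < y + 1 := by exact_mod_cast hc
      linarith
    have hA0 : (0:ℝ) < (A:ℝ) := by exact_mod_cast A.pos
    have hfinal : 1/2 * g ^ (-(1/t0)) ≤ 1/(A:ℝ) * 1 := by
      rw [mul_one, hgy]
      have heq2 : 1/2 * (1/y) = 1/(2*y) := by
        field_simp
      rw [heq2]
      exact one_div_le_one_div_of_le hA0 h2y
    linarith
  · -- upper bound
    have hfiber : ∀ b : ℕ+, Summable (fun a : ℕ+ => F (a, b)) := by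
      intro b
      exact Summable.of_nonneg_of_le (fun a => hFnn (a,b)) (fun a => hFle (a,b))
        (summable_pfn.mul_right (pfn b))
    have hF'sum : Summable (fun q : ℕ+ × ℕ+ => F (q.2, q.1)) := hFsum.prod_symm
    have hsum_eq : HasSum (fun b : ℕ+ => ∑' a : ℕ+, F (a, b)) (∑' p, F p) := by
      have h1 : HasSum (fun q : ℕ+ × ℕ+ => F (q.2, q.1)) (∑' p, F p) := by
        have h2 := hF'sum.hasSum
        rwa [show (∑' q : ℕ+ × ℕ+, F (q.2, q.1)) = ∑' p, F p from
          (Equiv.prodComm ℕ+ ℕ+).tsum_eq F] at h2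
      exact h1.prod_fiberwise (fun b => (hfiber b).hasSum)
    have hbound : ∀ b : ℕ+, (∑' a : ℕ+, F (a, b)) ≤ (b:ℝ)^(s-2) * g ^ (-(1/t0)) := by
      intro b
      have hb0 : (0:ℝ) < (b:ℝ) := by exact_mod_cast b.pos
      have hbt : (0:ℝ) < (b:ℝ)^t1 := Real.rpow_pos_of_pos hb0 _
      set xb : ℝ := g / (b:ℝ)^t1 with hxb
      have hxb0 : 0 < xb := by positivity
      have hsplit : ∀ a : ℕ+, F (a,b) = (if xb ≤ (a:ℝ)^t0 then pfn a else 0) * pfn b := by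
        intro a
        rw [hF]; dsimp only
        have hiff : g ≤ (a:ℝ)^t0 * (b:ℝ)^t1 ↔ xb ≤ (a:ℝ)^t0 := by
          rw [hxb, div_le_iff₀ hbt]
        rw [if_congr hiff rfl rfl]
        split
        · rfl
        · rw [zero_mul]
      have h1 : (∑' a : ℕ+, F (a,b))
          = (∑' a : ℕ+, if xb ≤ (a:ℝ)^t0 then pfn a else 0) * pfn b := by
        rw [tsum_congr hsplit, tsum_mul_right]
      rw [h1]
      have h2 := tail_rpow_le t0 ht0 xb hxb0
      have h3 : xb ^ (-(1/t0)) = g ^ (-(1/t0)) * (b:ℝ)^s := by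
        rw [hxb, Real.div_rpow hg0.le hbt.le, ← Real.rpow_mul hb0.le]
        rw [show t1 * (-(1/t0)) = -s by rw [hs]; ring]
        rw [Real.rpow_neg hb0.le, div_inv_eq_mul]
      have hpb : pfn b ≤ (b:ℝ)^(-2:ℝ) := by
        have hb2 : (b:ℝ)^(-2:ℝ) = 1/((b:ℝ)*(b:ℝ)) := by
          rw [Real.rpow_neg hb0.le, show ((2:ℝ)) = ((2:ℕ):ℝ) by norm_num,
            Real.rpow_natCast, pow_two, one_div]
        rw [hb2, pfn]
        exact one_div_le_one_div_of_le (by positivity) (by nlinarith)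
      have h4 : (b:ℝ)^s * pfn b ≤ (b:ℝ)^(s-2) := by
        calc (b:ℝ)^s * pfn b ≤ (b:ℝ)^s * (b:ℝ)^(-2:ℝ) :=
              mul_le_mul_of_nonneg_left hpb (by positivity)
          _ = (b:ℝ)^(s-2) := by
              rw [← Real.rpow_add hb0, ← sub_eq_add_neg]
      calc (∑' a : ℕ+, if xb ≤ (a:ℝ)^t0 then pfn a else 0) * pfn b
          ≤ xb ^ (-(1/t0)) * pfn b := mul_le_mul_of_nonneg_right h2 (pfn_nonneg b)
        _ = g ^ (-(1/t0)) * ((b:ℝ)^s * pfn b) := by rw [h3, mul_assoc]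
        _ ≤ g ^ (-(1/t0)) * (b:ℝ)^(s-2) :=
            mul_le_mul_of_nonneg_left h4 (by positivity)
        _ = (b:ℝ)^(s-2) * g ^ (-(1/t0)) := mul_comm _ _
    have hfin := Summable.tsum_le_tsum hbound hsum_eq.summable (hsum2.mul_right _)
    rw [hsum_eq.tsum_eq, tsum_mul_right] at hfin
    exact hfin
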